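/- arXiv:math/0503506 — 2 statements merged into one kernel-verified Lean document; each statement's English description precedes it below -/
import Mathlib

section
/- There exists a constant c > 0 such that for every τ ≥ 1, every positive integer k, and every f ∈ C²_c(ℝ), one has c·τ^{-k}·‖f‖²_{L²} ≤ τ^{-k}‖y^k(∂_y - y)f‖²_{L²} + ‖(∂_y + y)f‖²_{L²}. -/
open MeasureTheory Set


lemma amgm_pt (a b ε : ℝ) (hε : 0 < ε) :
    a * b ≤ (ε * a ^ 2 + b ^ 2 / ε) / 2 := by
  have h : b ^ 2 / ε * ε = b ^ 2 := div_mul_cancel₀ _ hε.ne'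
  nlinarith [sq_nonneg (ε * a - b), sq_nonneg a, mul_pos hε hε]

lemma amgm_opt {I X Y : ℝ} (hX : 0 ≤ X) (hY : 0 ≤ Y)
    (h : ∀ ε : ℝ, 0 < ε → I ≤ (ε * X + Y / ε) / 2) :
    I ≤ Real.sqrt X * Real.sqrt Y := by
  have key : I ≤ 0 ∨ I ≤ Real.sqrt X * Real.sqrt Y := by
    rcases eq_or_lt_of_le hX with hX0 | hX0
    · left
      by_contra hc; push_neg at hc
      have h1 := h (Y / I + 1) (by positivity)
      rw [← hX0, mul_zero, zero_add] at h1
      have h2 : Y / (Y / I + 1) < I := by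
        rcases eq_or_lt_of_le hY with hY0 | hY0
        · rw [← hY0]; simpa using hc
        · have hd : Y / I < Y / I + 1 := by linarith
          calc Y / (Y / I + 1) < Y / (Y / I) := by
                apply div_lt_div_of_pos_left hY0 (by positivity) hd
            _ = I := by field_simp
      have h3 : 0 ≤ Y / (Y / I + 1) := by positivity
      linarith
    · rcases eq_or_lt_of_le hY with hY0 | hY0
      · left
        by_contra hc; push_neg at hc
        have h1 := h (I / X) (by positivity)
        rw [← hY0] at h1
        have : I / X * X = I := div_mul_cancel₀ _ hX0.ne'
        rw [this] at h1
        have : (0:ℝ) / (I / X) = 0 := zero_div _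
        rw [this, add_zero] at h1
        linarith
      · right
        have h1 := h (Real.sqrt Y / Real.sqrt X) (by positivity)
        have hsX : Real.sqrt X > 0 := Real.sqrt_pos.2 hX0
        have hsY : Real.sqrt Y > 0 := Real.sqrt_pos.2 hY0
        have hXX : Real.sqrt X * Real.sqrt X = X := Real.mul_self_sqrt hX
        have hYY : Real.sqrt Y * Real.sqrt Y = Y := Real.mul_self_sqrt hY
        have e1 : Real.sqrt Y / Real.sqrt X * X = Real.sqrt Y * Real.sqrt X := by
          rw [← hXX]; field_simp; rw [Real.sqrt_sq hsX.le]
        have e2 : Y / (Real.sqrt Y / Real.sqrt X) = Real.sqrt Y * Real.sqrt X := by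
          rw [← hYY]; field_simp; rw [Real.sqrt_sq hsY.le]
        rw [e1, e2] at h1
        linarith [h1]
  rcases key with h1 | h1
  · exact h1.trans (by positivity)
  · exact h1

lemma hasDerivAt_weight (s y : ℝ) (f : ℝ → ℂ) (hd : HasDerivAt f (deriv f y) y) :
    HasDerivAt (fun t => (Real.exp (s * t ^ 2 / 2) : ℂ) * f t)
      ((Real.exp (s * y ^ 2 / 2) : ℂ) * (deriv f y + (s : ℂ) * y * f y)) y := by
  have h1 : HasDerivAt (fun t : ℝ => s * t ^ 2 / 2) (s * y) y := by
    have := ((hasDerivAt_pow 2 y).const_mul s).div_const 2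
    refine this.congr_deriv ?_
    simp; ring
  have h2 : HasDerivAt (fun t => Real.exp (s * t ^ 2 / 2))
      (Real.exp (s * y ^ 2 / 2) * (s * y)) y := h1.exp
  have h3 : HasDerivAt (fun t : ℝ => (Real.exp (s * t ^ 2 / 2) : ℂ))
      ((Real.exp (s * y ^ 2 / 2) * (s * y) : ℝ) : ℂ) y := h2.ofReal_comp
  have h4 := h3.mul hd
  refine h4.congr_deriv ?_
  push_cast
  ring

lemma ftc_weight (s a b : ℝ) (f : ℝ → ℂ) (hf : ContDiff ℝ 2 f) :
    (∫ t in a..b, (Real.exp (s * t ^ 2 / 2) : ℂ) * (deriv f t + (s : ℂ) * t * f t))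
      = (Real.exp (s * b ^ 2 / 2) : ℂ) * f b - (Real.exp (s * a ^ 2 / 2) : ℂ) * f a := by
  have hdc : Continuous (deriv f) := hf.continuous_deriv one_le_two
  apply intervalIntegral.integral_eq_sub_of_hasDerivAt
  · intro t _
    exact hasDerivAt_weight s t f
      ((hf.differentiable two_ne_zero).differentiableAt.hasDerivAt)
  · apply Continuous.intervalIntegrable
    apply Continuous.mul
    · exact Complex.continuous_ofReal.comp (Real.continuous_exp.comp (by continuity))
    · exact hdc.add ((continuous_const.mul Complex.continuous_ofReal).mul hf.continuous)


set_option maxHeartbeats 1000000 in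
private lemma key_bound (f : ℝ → ℂ) (hf : ContDiff ℝ 2 f) (hsupp : HasCompactSupport f)
    (k : ℕ) (hk : 1 ≤ k) :
    (∫ y : ℝ, ‖f y‖ ^ 2) ≤
      40 * ((∫ y : ℝ, ‖(y : ℂ) ^ k * (deriv f y - y * f y)‖ ^ 2)
        + (∫ y : ℝ, ‖deriv f y + y * f y‖ ^ 2)) := by
  set v : ℝ → ℂ := fun y => deriv f y - (y : ℂ) * f y with hv
  set u : ℝ → ℂ := fun y => deriv f y + (y : ℂ) * f y with hu
  have hfc : Continuous f := hf.continuous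
  have hdc : Continuous (deriv f) := hf.continuous_deriv one_le_two
  have hyc : Continuous (fun y : ℝ => (y : ℂ) * f y) := Complex.continuous_ofReal.mul hfc
  have hvc : Continuous v := hdc.sub hyc
  have huc : Continuous u := hdc.add hyc
  have hds : HasCompactSupport (deriv f) := hsupp.deriv
  have hys : HasCompactSupport (fun y : ℝ => (y : ℂ) * f y) := hsupp.mul_left
  have hysneg : HasCompactSupport (fun y : ℝ => -((y : ℂ) * f y)) := by
    have := hys.comp_left (g := fun z : ℂ => -z) (by simp)
    simpa [Function.comp_def] using this
  have hvs : HasCompactSupport v := by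
    have := hds.add hysneg
    have e : v = deriv f + fun y : ℝ => -((y : ℂ) * f y) := by funext y; simp [hv, sub_eq_add_neg]
    rw [e]; exact this
  have hus : HasCompactSupport u := hds.add hys
  have hkvc : Continuous (fun y : ℝ => (y : ℂ) ^ k * v y) :=
    (Complex.continuous_ofReal.pow k).mul hvc
  have hkvs : HasCompactSupport (fun y : ℝ => (y : ℂ) ^ k * v y) := hvs.mul_left
  have int_sq : ∀ g : ℝ → ℂ, Continuous g → HasCompactSupport g →
      Integrable (fun y : ℝ => ‖g y‖ ^ 2) := by
    intro g hc hs
    have h1 : HasCompactSupport (fun y : ℝ => ‖g y‖ ^ 2) := by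
      have := hs.comp_left (g := fun z : ℂ => ‖z‖ ^ 2) (by simp)
      simpa [Function.comp_def] using this
    exact (hc.norm.pow 2).integrable_of_hasCompactSupport h1
  have hFi : Integrable (fun y : ℝ => ‖f y‖ ^ 2) := int_sq f hfc hsupp
  have hVi : Integrable (fun y : ℝ => ‖(y : ℂ) ^ k * v y‖ ^ 2) := int_sq _ hkvc hkvs
  have hUi : Integrable (fun y : ℝ => ‖u y‖ ^ 2) := int_sq u huc hus
  set V2 := ∫ y : ℝ, ‖(y : ℂ) ^ k * v y‖ ^ 2 with hV2def
  set U2 := ∫ y : ℝ, ‖u y‖ ^ 2 with hU2def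
  have hV2 : 0 ≤ V2 := integral_nonneg fun y => by positivity
  have hU2 : 0 ≤ U2 := integral_nonneg fun y => by positivity
  set V := Real.sqrt V2 with hVdef
  set U := Real.sqrt U2 with hUdef
  have hVnn : 0 ≤ V := Real.sqrt_nonneg _
  have hUnn : 0 ≤ U := Real.sqrt_nonneg _
  have hVsq : V ^ 2 = V2 := Real.sq_sqrt hV2
  have hUsq : U ^ 2 = U2 := Real.sq_sqrt hU2
  -- choose R
  obtain ⟨R0, hR0⟩ := hsupp.isBounded.subset_closedBall 0
  set R : ℝ := max R0 2 + 1 with hRdef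
  have hR2 : (2 : ℝ) ≤ R := by
    have := le_max_right R0 2; linarith
  have hfz : f (-R) = 0 := by
    apply image_eq_zero_of_notMem_tsupport
    intro hmem
    have h1 := hR0 hmem
    rw [Metric.mem_closedBall, Real.dist_eq, sub_zero, abs_neg,
      abs_of_nonneg (by linarith : (0 : ℝ) ≤ R)] at h1
    have h2 : R0 ≤ max R0 2 := le_max_left _ _
    linarith
  -- boundary bound : ‖f (-1)‖ ≤ exp(1/2) * V
  have hbd : ‖f (-1)‖ ≤ Real.exp (1 / 2) * V := by
    have hab : (-R : ℝ) ≤ -1 := by linarith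
    have hftc := ftc_weight (-1) (-R) (-1) f hf
    rw [hfz, mul_zero, sub_zero] at hftc
    have hint : (∫ t in (-R)..(-1 : ℝ),
          (Real.exp ((-1) * t ^ 2 / 2) : ℂ) * (deriv f t + ((-1 : ℝ) : ℂ) * t * f t))
        = ∫ t in (-R)..(-1 : ℝ), (Real.exp ((-1) * t ^ 2 / 2) : ℂ) * v t := by
      apply intervalIntegral.integral_congr
      intro t _
      simp only [hv]; push_cast; ring
    rw [hint] at hftc
    have hnorm : Real.exp ((-1) * (-1 : ℝ) ^ 2 / 2) * ‖f (-1)‖ ≤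
        ∫ t in (-R)..(-1 : ℝ), Real.exp ((-1) * t ^ 2 / 2) * ‖v t‖ := by
      calc Real.exp ((-1) * (-1 : ℝ) ^ 2 / 2) * ‖f (-1)‖
          = ‖(Real.exp ((-1) * (-1 : ℝ) ^ 2 / 2) : ℂ) * f (-1)‖ := by
            rw [norm_mul, Complex.norm_real, Real.norm_eq_abs,
              abs_of_pos (Real.exp_pos _)]
        _ = ‖∫ t in (-R)..(-1 : ℝ), (Real.exp ((-1) * t ^ 2 / 2) : ℂ) * v t‖ := by rw [hftc]
        _ ≤ ∫ t in (-R)..(-1 : ℝ), ‖(Real.exp ((-1) * t ^ 2 / 2) : ℂ) * v t‖ :=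
            intervalIntegral.norm_integral_le_integral_norm hab
        _ = ∫ t in (-R)..(-1 : ℝ), Real.exp ((-1) * t ^ 2 / 2) * ‖v t‖ := by
            apply intervalIntegral.integral_congr
            intro t _
            show ‖(Real.exp ((-1) * t ^ 2 / 2) : ℂ) * v t‖
              = Real.exp ((-1) * t ^ 2 / 2) * ‖v t‖
            rw [norm_mul, Complex.norm_real, Real.norm_eq_abs,
              abs_of_pos (Real.exp_pos _)]
    set X := ∫ t in (-R)..(-1 : ℝ), ‖v t‖ ^ 2 with hXdef
    set Y := ∫ t in (-R)..(-1 : ℝ), Real.exp ((-1) * t ^ 2 / 2) ^ 2 with hYdef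
    have hwc : Continuous (fun t : ℝ => Real.exp ((-1) * t ^ 2 / 2)) :=
      Real.continuous_exp.comp (by continuity)
    have hvint : IntervalIntegrable (fun t => ‖v t‖ ^ 2) volume (-R) (-1) :=
      (hvc.norm.pow 2).intervalIntegrable _ _
    have hwint : IntervalIntegrable (fun t => Real.exp ((-1) * t ^ 2 / 2) ^ 2) volume (-R) (-1) :=
      (hwc.pow 2).intervalIntegrable _ _
    have hXnn : 0 ≤ X := intervalIntegral.integral_nonneg hab fun t _ => by positivity
    have hYnn : 0 ≤ Y := intervalIntegral.integral_nonneg hab fun t _ => by positivity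
    have hB : (∫ t in (-R)..(-1 : ℝ), Real.exp ((-1) * t ^ 2 / 2) * ‖v t‖)
        ≤ Real.sqrt X * Real.sqrt Y := by
      apply amgm_opt hXnn hYnn
      intro ε hε
      calc (∫ t in (-R)..(-1 : ℝ), Real.exp ((-1) * t ^ 2 / 2) * ‖v t‖)
          ≤ ∫ t in (-R)..(-1 : ℝ),
              (ε * ‖v t‖ ^ 2 + Real.exp ((-1) * t ^ 2 / 2) ^ 2 / ε) / 2 := by
            apply intervalIntegral.integral_mono_on hab
              ((hwc.mul hvc.norm).intervalIntegrable _ _)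
              (((hvint.const_mul ε).add (hwint.div_const ε)).div_const 2)
            intro t _
            have h1 := amgm_pt (‖v t‖) (Real.exp ((-1) * t ^ 2 / 2)) ε hε
            simp only [Pi.mul_apply]; linarith [h1]
        _ = (ε * X + Y / ε) / 2 := by
            rw [intervalIntegral.integral_div,
              intervalIntegral.integral_add (hvint.const_mul ε) (hwint.div_const ε),
              intervalIntegral.integral_const_mul, intervalIntegral.integral_div]
    have hX : X ≤ V2 := by
      rw [hXdef, intervalIntegral.integral_of_le hab]
      calc (∫ t in Ioc (-R) (-1 : ℝ), ‖v t‖ ^ 2)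
          ≤ ∫ t in Ioc (-R) (-1 : ℝ), ‖(t : ℂ) ^ k * v t‖ ^ 2 := by
            apply setIntegral_mono_on ((int_sq v hvc hvs).integrableOn)
              hVi.integrableOn measurableSet_Ioc
            intro t ht
            have ht1 : 1 ≤ |t| := by
              rw [abs_of_neg (by linarith [ht.2] : t < 0)]; linarith [ht.2]
            have hp : (1 : ℝ) ≤ |t| ^ k := one_le_pow₀ ht1
            have hp2 : (1 : ℝ) ≤ (|t| ^ k) ^ 2 := one_le_pow₀ hp
            rw [norm_mul, norm_pow, Complex.norm_real, Real.norm_eq_abs]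
            nlinarith [sq_nonneg (‖v t‖), hp2]
        _ ≤ V2 := setIntegral_le_integral hVi
            (Filter.Eventually.of_forall fun y => by positivity)
    have hY : Y ≤ 1 := by
      rw [hYdef]
      calc (∫ t in (-R)..(-1 : ℝ), Real.exp ((-1) * t ^ 2 / 2) ^ 2)
          ≤ ∫ t in (-R)..(-1 : ℝ), Real.exp t := by
            apply intervalIntegral.integral_mono_on hab hwint
              (Real.continuous_exp.intervalIntegrable _ _)
            intro t ht
            rw [sq, ← Real.exp_add]
            apply Real.exp_le_exp.2
            nlinarith [mul_nonneg (by linarith [ht.2] : (0:ℝ) ≤ -t)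
              (by linarith [ht.2] : (0:ℝ) ≤ -(t + 1))]
        _ = Real.exp (-1) - Real.exp (-R) := integral_exp
        _ ≤ 1 := by
            have h1 : Real.exp (-1 : ℝ) ≤ 1 := Real.exp_le_one_iff.2 (by norm_num)
            linarith [Real.exp_pos (-R)]
    have hsX : Real.sqrt X ≤ V := Real.sqrt_le_sqrt hX
    have hsY : Real.sqrt Y ≤ 1 := by
      rw [show (1 : ℝ) = Real.sqrt 1 by simp]
      exact Real.sqrt_le_sqrt hY
    have h1 : Real.exp ((-1) * (-1 : ℝ) ^ 2 / 2) * ‖f (-1)‖ ≤ V :=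
      calc Real.exp ((-1) * (-1 : ℝ) ^ 2 / 2) * ‖f (-1)‖
          ≤ Real.sqrt X * Real.sqrt Y := le_trans hnorm hB
        _ ≤ V * 1 := mul_le_mul hsX hsY (Real.sqrt_nonneg _) hVnn
        _ = V := mul_one V
    have h1' : Real.exp (-(1 / 2) : ℝ) * ‖f (-1)‖ ≤ V := by
      rwa [show ((-1) * (-1 : ℝ) ^ 2 / 2) = (-(1 / 2) : ℝ) by norm_num] at h1
    have hee : Real.exp (1 / 2 : ℝ) * Real.exp (-(1 / 2) : ℝ) = 1 := by
      rw [← Real.exp_add]; norm_num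
    calc ‖f (-1)‖ = Real.exp (1 / 2) * (Real.exp (-(1 / 2) : ℝ) * ‖f (-1)‖) := by
          rw [← mul_assoc, hee, one_mul]
      _ ≤ Real.exp (1 / 2) * V :=
          mul_le_mul_of_nonneg_left h1' (Real.exp_pos _).le
  -- center bound
  have hcen : ∀ y ∈ Icc (-1 : ℝ) 1, ‖f y‖ ≤ 3 * V + 3 * U := by
    have hgc : Continuous (fun t : ℝ => Real.exp (1 * t ^ 2 / 2)) :=
      Real.continuous_exp.comp (by continuity)
    set X := ∫ t in (-1 : ℝ)..1, ‖u t‖ ^ 2 with hXdef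
    set Y := ∫ t in (-1 : ℝ)..1, Real.exp (1 * t ^ 2 / 2) ^ 2 with hYdef
    have huint : IntervalIntegrable (fun t => ‖u t‖ ^ 2) volume (-1) 1 :=
      (huc.norm.pow 2).intervalIntegrable _ _
    have hwint : IntervalIntegrable (fun t => Real.exp (1 * t ^ 2 / 2) ^ 2) volume (-1) 1 :=
      (hgc.pow 2).intervalIntegrable _ _
    have h11 : (-1 : ℝ) ≤ 1 := by norm_num
    have hXnn : 0 ≤ X := intervalIntegral.integral_nonneg h11 fun t _ => by positivity
    have hYnn : 0 ≤ Y := intervalIntegral.integral_nonneg h11 fun t _ => by positivity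
    have hX : X ≤ U2 := by
      rw [hXdef, intervalIntegral.integral_of_le h11]
      exact setIntegral_le_integral hUi (Filter.Eventually.of_forall fun y => by positivity)
    have hY : Y ≤ 6 := by
      rw [hYdef]
      calc (∫ t in (-1 : ℝ)..1, Real.exp (1 * t ^ 2 / 2) ^ 2)
          ≤ ∫ _t in (-1 : ℝ)..1, (3 : ℝ) := by
            apply intervalIntegral.integral_mono_on h11 hwint
              (continuous_const.intervalIntegrable _ _)
            intro t ht
            have h1 : t ^ 2 ≤ 1 := by nlinarith [ht.1, ht.2]
            have h2 : Real.exp (1 * t ^ 2 / 2) ^ 2 = Real.exp (t ^ 2) := by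
              rw [sq, ← Real.exp_add]; ring_nf
            rw [h2]
            calc Real.exp (t ^ 2) ≤ Real.exp 1 := Real.exp_le_exp.2 h1
              _ ≤ 3 := by linarith [Real.exp_one_lt_d9]
        _ = 6 := by simp; norm_num
    have hB : (∫ t in (-1 : ℝ)..1, Real.exp (1 * t ^ 2 / 2) * ‖u t‖)
        ≤ Real.sqrt X * Real.sqrt Y := by
      apply amgm_opt hXnn hYnn
      intro ε hε
      calc (∫ t in (-1 : ℝ)..1, Real.exp (1 * t ^ 2 / 2) * ‖u t‖)
          ≤ ∫ t in (-1 : ℝ)..1,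
              (ε * ‖u t‖ ^ 2 + Real.exp (1 * t ^ 2 / 2) ^ 2 / ε) / 2 := by
            apply intervalIntegral.integral_mono_on h11
              ((hgc.mul huc.norm).intervalIntegrable _ _)
              (((huint.const_mul ε).add (hwint.div_const ε)).div_const 2)
            intro t _
            have h1 := amgm_pt (‖u t‖) (Real.exp (1 * t ^ 2 / 2)) ε hε
            simp only [Pi.mul_apply]; linarith [h1]
        _ = (ε * X + Y / ε) / 2 := by
            rw [intervalIntegral.integral_div,
              intervalIntegral.integral_add (huint.const_mul ε) (hwint.div_const ε),
              intervalIntegral.integral_const_mul, intervalIntegral.integral_div]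
    have hsX : Real.sqrt X ≤ U := Real.sqrt_le_sqrt hX
    have hsY : Real.sqrt Y ≤ 3 := by
      have h9 : Y ≤ 9 := by linarith
      have := Real.sqrt_le_sqrt h9
      rwa [show (9 : ℝ) = 3 ^ 2 by norm_num, Real.sqrt_sq (by norm_num : (0:ℝ) ≤ 3)] at this
    have hB2 : (∫ t in (-1 : ℝ)..1, Real.exp (1 * t ^ 2 / 2) * ‖u t‖) ≤ 3 * U := by
      calc (∫ t in (-1 : ℝ)..1, Real.exp (1 * t ^ 2 / 2) * ‖u t‖)
          ≤ Real.sqrt X * Real.sqrt Y := hB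
        _ ≤ U * 3 := mul_le_mul hsX hsY (Real.sqrt_nonneg _) hUnn
        _ = 3 * U := mul_comm _ _
    -- now the pointwise bound
    intro y hy
    have hy1 : (-1 : ℝ) ≤ y := hy.1
    have hy2 : y ≤ 1 := hy.2
    have hftc := ftc_weight 1 (-1) y f hf
    have hint : (∫ t in (-1 : ℝ)..y,
          (Real.exp (1 * t ^ 2 / 2) : ℂ) * (deriv f t + ((1 : ℝ) : ℂ) * t * f t))
        = ∫ t in (-1 : ℝ)..y, (Real.exp (1 * t ^ 2 / 2) : ℂ) * u t := by
      apply intervalIntegral.integral_congr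
      intro t _
      simp only [hu]; push_cast; ring
    rw [hint] at hftc
    have h0 : ‖f y‖ ≤ ‖(Real.exp (1 * y ^ 2 / 2) : ℂ) * f y‖ := by
      rw [norm_mul, Complex.norm_real, Real.norm_eq_abs, abs_of_pos (Real.exp_pos _)]
      nlinarith [Real.one_le_exp (by positivity : (0 : ℝ) ≤ 1 * y ^ 2 / 2), norm_nonneg (f y)]
    have h1 : ‖(Real.exp (1 * y ^ 2 / 2) : ℂ) * f y‖
        ≤ ‖(Real.exp (1 * (-1 : ℝ) ^ 2 / 2) : ℂ) * f (-1)‖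
          + ‖∫ t in (-1 : ℝ)..y, (Real.exp (1 * t ^ 2 / 2) : ℂ) * u t‖ := by
      have heq : (Real.exp (1 * y ^ 2 / 2) : ℂ) * f y
          = (Real.exp (1 * (-1 : ℝ) ^ 2 / 2) : ℂ) * f (-1)
            + ∫ t in (-1 : ℝ)..y, (Real.exp (1 * t ^ 2 / 2) : ℂ) * u t := by
        rw [hftc]; ring
      rw [heq]; exact norm_add_le _ _
    have h2 : ‖(Real.exp (1 * (-1 : ℝ) ^ 2 / 2) : ℂ) * f (-1)‖
        ≤ Real.exp (1 / 2) * (Real.exp (1 / 2) * V) := by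
      rw [norm_mul, Complex.norm_real, Real.norm_eq_abs, abs_of_pos (Real.exp_pos _),
        show (1 * (-1 : ℝ) ^ 2 / 2) = 1 / 2 by norm_num]
      exact mul_le_mul_of_nonneg_left hbd (Real.exp_pos _).le
    have h3 : ‖∫ t in (-1 : ℝ)..y, (Real.exp (1 * t ^ 2 / 2) : ℂ) * u t‖
        ≤ ∫ t in (-1 : ℝ)..1, Real.exp (1 * t ^ 2 / 2) * ‖u t‖ := by
      have hgc2 : Continuous (fun t : ℝ => Real.exp (1 * t ^ 2 / 2) * ‖u t‖) := hgc.mul huc.norm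
      calc ‖∫ t in (-1 : ℝ)..y, (Real.exp (1 * t ^ 2 / 2) : ℂ) * u t‖
          ≤ ∫ t in (-1 : ℝ)..y, ‖(Real.exp (1 * t ^ 2 / 2) : ℂ) * u t‖ :=
            intervalIntegral.norm_integral_le_integral_norm hy1
        _ = ∫ t in (-1 : ℝ)..y, Real.exp (1 * t ^ 2 / 2) * ‖u t‖ := by
            apply intervalIntegral.integral_congr
            intro t _
            show ‖(Real.exp (1 * t ^ 2 / 2) : ℂ) * u t‖ = Real.exp (1 * t ^ 2 / 2) * ‖u t‖
            rw [norm_mul, Complex.norm_real, Real.norm_eq_abs, abs_of_pos (Real.exp_pos _)]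
        _ ≤ ∫ t in (-1 : ℝ)..1, Real.exp (1 * t ^ 2 / 2) * ‖u t‖ := by
            have hsplit2 := intervalIntegral.integral_add_adjacent_intervals
              (hgc2.intervalIntegrable (μ := volume) (-1) y)
              (hgc2.intervalIntegrable (μ := volume) y 1)
            have hpos : 0 ≤ ∫ t in y..1, Real.exp (1 * t ^ 2 / 2) * ‖u t‖ :=
              intervalIntegral.integral_nonneg hy2 fun t _ => by positivity
            linarith
    have hexp1 : Real.exp (1 / 2 : ℝ) * Real.exp (1 / 2 : ℝ) ≤ 3 := by
      rw [← Real.exp_add, show (1 / 2 : ℝ) + 1 / 2 = 1 by norm_num]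
      linarith [Real.exp_one_lt_d9]
    have : ‖f y‖ ≤ Real.exp (1 / 2) * (Real.exp (1 / 2) * V) + 3 * U := by
      linarith [h0, h1, h2, le_trans h3 (le_refl _), hB2, h3]
    calc ‖f y‖ ≤ Real.exp (1 / 2) * (Real.exp (1 / 2) * V) + 3 * U := this
      _ = (Real.exp (1 / 2) * Real.exp (1 / 2)) * V + 3 * U := by ring
      _ ≤ 3 * V + 3 * U := by nlinarith [hexp1, hVnn]
  -- tail pointwise
  have htail : ∀ y : ℝ, y ∉ Icc (-1 : ℝ) 1 →
      ‖f y‖ ^ 2 ≤ (‖(y : ℂ) ^ k * v y‖ ^ 2 + ‖u y‖ ^ 2) / 2 := by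
    intro y hy
    have hy1 : 1 ≤ |y| := by
      rcases lt_or_ge y (-1) with h | h
      · rw [abs_of_neg (by linarith)]; linarith
      · have h2 : 1 < y := by
          by_contra h3
          push_neg at h3
          exact hy ⟨h, h3⟩
        rw [abs_of_pos (by linarith)]; linarith
    have huv : u y - v y = 2 * (y : ℂ) * f y := by
      simp only [hu, hv]; ring
    have hn2 : ‖u y - v y‖ = 2 * |y| * ‖f y‖ := by
      rw [huv, norm_mul, norm_mul]
      simp [Complex.norm_real, Real.norm_eq_abs]
    have hn1 : ‖u y - v y‖ ≤ ‖u y‖ + ‖v y‖ := norm_sub_le _ _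
    have hkv : ‖v y‖ ≤ ‖(y : ℂ) ^ k * v y‖ := by
      rw [norm_mul, norm_pow, Complex.norm_real, Real.norm_eq_abs]
      have h1 : (1 : ℝ) ≤ |y| ^ k := one_le_pow₀ hy1
      nlinarith [norm_nonneg (v y)]
    have h2f : 2 * ‖f y‖ ≤ ‖(y : ℂ) ^ k * v y‖ + ‖u y‖ := by
      nlinarith [norm_nonneg (f y)]
    nlinarith [norm_nonneg (f y), norm_nonneg ((y : ℂ) ^ k * v y), norm_nonneg (u y),
      sq_nonneg (‖(y : ℂ) ^ k * v y‖ - ‖u y‖)]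
  -- integral over center
  have hIcen : (∫ y in Icc (-1 : ℝ) 1, ‖f y‖ ^ 2) ≤ 36 * (V2 + U2) := by
    have hle : (∫ y in Icc (-1 : ℝ) 1, ‖f y‖ ^ 2) ≤ ∫ _y in Icc (-1 : ℝ) 1, (3 * V + 3 * U) ^ 2 := by
      apply setIntegral_mono_on hFi.integrableOn
        (integrableOn_const measure_Icc_lt_top.ne) measurableSet_Icc
      intro y hy
      have h1 := hcen y hy
      nlinarith [norm_nonneg (f y)]
    have hconst : (∫ _y in Icc (-1 : ℝ) 1, (3 * V + 3 * U) ^ 2) = 2 * (3 * V + 3 * U) ^ 2 := by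
      rw [setIntegral_const, Real.volume_real_Icc]
      rw [show (1 : ℝ) - (-1) = 2 by norm_num, max_eq_left (by norm_num : (0:ℝ) ≤ 2)]
      rw [smul_eq_mul]
    have hsq : (3 * V + 3 * U) ^ 2 ≤ 18 * (V2 + U2) := by
      nlinarith [sq_nonneg (V - U), hVsq, hUsq]
    linarith
  -- integral over tail
  have hItail : (∫ y in (Icc (-1 : ℝ) 1)ᶜ, ‖f y‖ ^ 2) ≤ (V2 + U2) / 2 := by
    have hmono : (∫ y in (Icc (-1 : ℝ) 1)ᶜ, ‖f y‖ ^ 2)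
        ≤ ∫ y in (Icc (-1 : ℝ) 1)ᶜ, (‖(y : ℂ) ^ k * v y‖ ^ 2 + ‖u y‖ ^ 2) / 2 :=
      setIntegral_mono_on hFi.integrableOn ((hVi.add hUi).div_const 2).integrableOn
        measurableSet_Icc.compl htail
    have h2 : (∫ y in (Icc (-1 : ℝ) 1)ᶜ, (‖(y : ℂ) ^ k * v y‖ ^ 2 + ‖u y‖ ^ 2) / 2)
        ≤ ∫ y : ℝ, (‖(y : ℂ) ^ k * v y‖ ^ 2 + ‖u y‖ ^ 2) / 2 :=
      setIntegral_le_integral ((hVi.add hUi).div_const 2)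
        (Filter.Eventually.of_forall fun y => by positivity)
    have h3 : (∫ y : ℝ, (‖(y : ℂ) ^ k * v y‖ ^ 2 + ‖u y‖ ^ 2) / 2) = (V2 + U2) / 2 := by
      rw [integral_div, integral_add hVi hUi]
    linarith
  have hsplit : (∫ y : ℝ, ‖f y‖ ^ 2)
      = (∫ y in Icc (-1 : ℝ) 1, ‖f y‖ ^ 2) + (∫ y in (Icc (-1 : ℝ) 1)ᶜ, ‖f y‖ ^ 2) :=
    (integral_add_compl measurableSet_Icc hFi).symm
  rw [hsplit]
  linarith


/-- There is `c > 0` so that for every `τ ≥ 1`, every positive integer `k`, and every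
`f ∈ C²_c(ℝ)`, `c τ^{-k} ‖f‖² ≤ τ^{-k} ‖y^k(∂_y - y)f‖² + ‖(∂_y + y)f‖²` in `L²(ℝ)`. -/
theorem lower_bound_quadratic_form :
    ∃ c : ℝ, 0 < c ∧ ∀ (τ : ℝ), 1 ≤ τ → ∀ (k : ℕ), 1 ≤ k → ∀ f : ℝ → ℂ,
      ContDiff ℝ 2 f → HasCompactSupport f →
      c * τ ^ (-(k : ℤ)) * (∫ y : ℝ, ‖f y‖ ^ 2) ≤
        τ ^ (-(k : ℤ)) * (∫ y : ℝ, ‖(y : ℂ) ^ k * (deriv f y - y * f y)‖ ^ 2)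
          + (∫ y : ℝ, ‖deriv f y + y * f y‖ ^ 2) := by
  refine ⟨1 / 40, by norm_num, ?_⟩
  intro τ hτ k hk f hf hsupp
  have hkey := key_bound f hf hsupp k hk
  have hp : (0 : ℝ) < τ ^ (-(k : ℤ)) := zpow_pos (by linarith) _
  have hp1 : τ ^ (-(k : ℤ)) ≤ 1 := zpow_le_one_of_nonpos₀ hτ (by simp)
  have hU2 : 0 ≤ ∫ y : ℝ, ‖deriv f y + (y : ℂ) * f y‖ ^ 2 :=
    integral_nonneg fun y => by positivity
  have hV2 : 0 ≤ ∫ y : ℝ, ‖(y : ℂ) ^ k * (deriv f y - y * f y)‖ ^ 2 :=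
    integral_nonneg fun y => by positivity
  have hF : 0 ≤ ∫ y : ℝ, ‖f y‖ ^ 2 := integral_nonneg fun y => by positivity
  nlinarith [mul_le_mul_of_nonneg_left hkey hp.le,
    mul_le_mul_of_nonneg_right hp1 hU2, mul_le_mul_of_nonneg_right hp1 hV2,
    mul_nonneg hp.le hV2, mul_nonneg hp.le hU2]
end

section
/- Let u_τ(x,t,s) = e^{iτt} e^{σ s} ψ(τ^{1/2} x) where σ ≥ 0, τ ≥ 1, and ψ : ℝ → ℂ is a Schwartz function with σ² = τ λ and Q_τ ψ = λ ψ (λ ≥ 0). Then the function u_τ satisfies 𝔏 u_τ = 0 on ℝ³, where 𝔏 = Z₁*Z₁ + Z₂*Z₂ + Z₃*Z₃ with Z₁ = ∂_x - ix∂_t, Z₂ = x^k(∂_x + ix∂_t), Z₃ = ∂_s. -/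
open MeasureTheory

/-- `Z₁ = ∂_x - i x ∂_t` on ℝ³ with coordinates `p = (x,(t,s))`. -/
noncomputable def Z1op (u : ℝ × ℝ × ℝ → ℂ) : ℝ × ℝ × ℝ → ℂ := fun p =>
  fderiv ℝ u p (1, 0, 0) - Complex.I * (p.1 : ℂ) * fderiv ℝ u p (0, 1, 0)

/-- `L = ∂_x + i x ∂_t` on ℝ³. -/
noncomputable def Lop3 (u : ℝ × ℝ × ℝ → ℂ) : ℝ × ℝ × ℝ → ℂ := fun p =>
  fderiv ℝ u p (1, 0, 0) + Complex.I * (p.1 : ℂ) * fderiv ℝ u p (0, 1, 0)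

/-- `Z₂ = x^k (∂_x + i x ∂_t)` on ℝ³. -/
noncomputable def Z2op (k : ℕ) (u : ℝ × ℝ × ℝ → ℂ) : ℝ × ℝ × ℝ → ℂ := fun p =>
  (p.1 : ℂ) ^ k * Lop3 u p

/-- `Z₃ = ∂_s` on ℝ³. -/
noncomputable def Z3op (u : ℝ × ℝ × ℝ → ℂ) : ℝ × ℝ × ℝ → ℂ := fun p =>
  fderiv ℝ u p (0, 0, 1)

/-- `𝔏 = Z₁*Z₁ + Z₂*Z₂ + Z₃*Z₃`, adjoints with respect to Lebesgue measure:
`Z₁* = -L`, `Z₂* = -Z₁ ∘ x^k`, `Z₃* = -∂_s`, so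
`𝔏 u = -L(Z₁u) - Z₁(x^k Z₂ u) - ∂_s² u`. -/
noncomputable def frakL3 (k : ℕ) (u : ℝ × ℝ × ℝ → ℂ) : ℝ × ℝ × ℝ → ℂ := fun p =>
  -(Lop3 (Z1op u) p) - Z1op (fun q => (q.1 : ℂ) ^ k * Z2op k u q) p - Z3op (Z3op u) p

/-- `Q_τ = -(∂_y - y)(∂_y + y) - τ^{-k}(∂_y + y) y^{2k} (∂_y - y)` on ℝ. -/
noncomputable def Qop (k : ℕ) (τ : ℝ) (F : ℝ → ℂ) : ℝ → ℂ := fun y =>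
  -(deriv (fun z => deriv F z + (z : ℂ) * F z) y - (y : ℂ) * (deriv F y + (y : ℂ) * F y))
    - (τ ^ (-(k : ℤ)) : ℝ) *
      (deriv (fun (z : ℝ) => (z : ℂ) ^ (2 * k) * (deriv F z - (z : ℂ) * F z)) y
        + (y : ℂ) * ((y : ℂ) ^ (2 * k) * (deriv F y - (y : ℂ) * F y)))



noncomputable def sep (τ σ : ℝ) (F : ℝ → ℂ) : ℝ × ℝ × ℝ → ℂ := fun p =>
  Complex.exp (Complex.I * τ * p.2.1) * (Real.exp (σ * p.2.2) : ℂ) * F (Real.sqrt τ * p.1)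

lemma sep_fderiv (τ σ : ℝ) (F : ℝ → ℂ) (d : ℂ) (p : ℝ × ℝ × ℝ)
    (hF : HasDerivAt F d (Real.sqrt τ * p.1)) (v : ℝ × ℝ × ℝ) :
    fderiv ℝ (sep τ σ F) p v =
      (v.1 : ℂ) * (Complex.exp (Complex.I * τ * p.2.1) * (Real.exp (σ * p.2.2) : ℂ)
          * (Real.sqrt τ * d))
      + (v.2.1 : ℂ) * (Complex.I * τ * sep τ σ F p)
      + (v.2.2 : ℂ) * (σ * sep τ σ F p) := by
  have h1 : HasDerivAt (fun t : ℝ => Complex.exp (Complex.I * τ * t))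
      (Complex.exp (Complex.I * τ * p.2.1) * (Complex.I * τ)) p.2.1 := by
    have h0 : HasDerivAt (fun t : ℝ => Complex.I * τ * t) (Complex.I * τ) p.2.1 := by
      simpa using (Complex.ofRealCLM.hasDerivAt (x := p.2.1)).const_mul (Complex.I * τ)
    simpa using h0.cexp
  have h2 : HasDerivAt (fun s : ℝ => ((Real.exp (σ * s) : ℝ) : ℂ))
      ((Real.exp (σ * p.2.2) * σ : ℝ) : ℂ) p.2.2 := by
    have h0 : HasDerivAt (fun s : ℝ => Real.exp (σ * s)) (Real.exp (σ * p.2.2) * σ) p.2.2 := by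
      simpa [Function.comp_def] using (Real.hasDerivAt_exp (σ * p.2.2)).comp p.2.2
        ((hasDerivAt_id p.2.2).const_mul σ)
    exact h0.ofReal_comp
  have hin : HasDerivAt (fun x : ℝ => Real.sqrt τ * x) (Real.sqrt τ) p.1 := by
    simpa using (hasDerivAt_id p.1).const_mul (Real.sqrt τ)
  have h3 : HasDerivAt (fun x : ℝ => F (Real.sqrt τ * x)) ((Real.sqrt τ : ℂ) * d) p.1 := by
    have := hF.scomp p.1 hin
    simpa [Function.comp_def, smul_eq_mul, Complex.real_smul] using this
  have pt : HasFDerivAt (fun p : ℝ × ℝ × ℝ => p.2.1)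
      ((ContinuousLinearMap.fst ℝ ℝ ℝ).comp (ContinuousLinearMap.snd ℝ ℝ (ℝ × ℝ))) p :=
    ((ContinuousLinearMap.fst ℝ ℝ ℝ).comp (ContinuousLinearMap.snd ℝ ℝ (ℝ × ℝ))).hasFDerivAt
  have ps : HasFDerivAt (fun p : ℝ × ℝ × ℝ => p.2.2)
      ((ContinuousLinearMap.snd ℝ ℝ ℝ).comp (ContinuousLinearMap.snd ℝ ℝ (ℝ × ℝ))) p :=
    ((ContinuousLinearMap.snd ℝ ℝ ℝ).comp (ContinuousLinearMap.snd ℝ ℝ (ℝ × ℝ))).hasFDerivAt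
  have px : HasFDerivAt (fun p : ℝ × ℝ × ℝ => p.1)
      (ContinuousLinearMap.fst ℝ ℝ (ℝ × ℝ)) p :=
    (ContinuousLinearMap.fst ℝ ℝ (ℝ × ℝ)).hasFDerivAt
  have hf1 := HasFDerivAt.comp (x := p) (h1.hasFDerivAt) pt
  have hf2 := HasFDerivAt.comp (x := p) (h2.hasFDerivAt) ps
  have hf3 := HasFDerivAt.comp (x := p) (h3.hasFDerivAt) px
  have hmul := (hf1.mul hf2).mul hf3
  have hfd : fderiv ℝ (sep τ σ F) p = _ := hmul.fderiv
  rw [hfd]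
  simp [sep, ContinuousLinearMap.smul_apply, ContinuousLinearMap.add_apply,
    ContinuousLinearMap.comp_apply, smul_eq_mul]
  ring

lemma sep_fd1 (τ σ : ℝ) (F : ℝ → ℂ) (d : ℂ) (p : ℝ × ℝ × ℝ)
    (hF : HasDerivAt F d (Real.sqrt τ * p.1)) :
    fderiv ℝ (sep τ σ F) p (1, 0, 0) =
      Complex.exp (Complex.I * τ * p.2.1) * (Real.exp (σ * p.2.2) : ℂ) * ((Real.sqrt τ : ℂ) * d) := by
  rw [sep_fderiv τ σ F d p hF]; norm_num

lemma sep_fd2 (τ σ : ℝ) (F : ℝ → ℂ) (d : ℂ) (p : ℝ × ℝ × ℝ)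
    (hF : HasDerivAt F d (Real.sqrt τ * p.1)) :
    fderiv ℝ (sep τ σ F) p (0, 1, 0) = Complex.I * τ * sep τ σ F p := by
  rw [sep_fderiv τ σ F d p hF]; norm_num

lemma sep_fd3 (τ σ : ℝ) (F : ℝ → ℂ) (d : ℂ) (p : ℝ × ℝ × ℝ)
    (hF : HasDerivAt F d (Real.sqrt τ * p.1)) :
    fderiv ℝ (sep τ σ F) p (0, 0, 1) = (σ : ℂ) * sep τ σ F p := by
  rw [sep_fderiv τ σ F d p hF]; norm_num

lemma Z1_sep (τ σ : ℝ) (hτ : 0 ≤ τ) (F : ℝ → ℂ) (hF : Differentiable ℝ F) :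
    Z1op (sep τ σ F) = sep τ σ (fun y => (Real.sqrt τ : ℂ) * (deriv F y + (y : ℂ) * F y)) := by
  funext p
  have hd := (hF (Real.sqrt τ * p.1)).hasDerivAt
  simp only [Z1op, sep_fd1 τ σ F _ p hd, sep_fd2 τ σ F _ p hd, sep]
  simp only [Complex.ofReal_mul]
  have hst : (Real.sqrt τ : ℂ) * (Real.sqrt τ : ℂ) = (τ : ℂ) := by
    norm_cast; exact Real.mul_self_sqrt hτ
  set E : ℂ := Complex.exp (Complex.I * τ * p.2.1) * ((Real.exp (σ * p.2.2) : ℝ) : ℂ) with hE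
  set f : ℂ := F (Real.sqrt τ * p.1) with hf
  linear_combination (-(τ : ℂ) * p.1 * E * f) * Complex.I_mul_I + (-(p.1 : ℂ) * E * f) * hst

lemma Lop3_sep (τ σ : ℝ) (hτ : 0 ≤ τ) (F : ℝ → ℂ) (hF : Differentiable ℝ F) :
    Lop3 (sep τ σ F) = sep τ σ (fun y => (Real.sqrt τ : ℂ) * (deriv F y - (y : ℂ) * F y)) := by
  funext p
  have hd := (hF (Real.sqrt τ * p.1)).hasDerivAt
  simp only [Lop3, sep_fd1 τ σ F _ p hd, sep_fd2 τ σ F _ p hd, sep]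
  simp only [Complex.ofReal_mul]
  have hst : (Real.sqrt τ : ℂ) * (Real.sqrt τ : ℂ) = (τ : ℂ) := by
    norm_cast; exact Real.mul_self_sqrt hτ
  set E : ℂ := Complex.exp (Complex.I * τ * p.2.1) * ((Real.exp (σ * p.2.2) : ℝ) : ℂ) with hE
  set f : ℂ := F (Real.sqrt τ * p.1) with hf
  linear_combination ((τ : ℂ) * p.1 * E * f) * Complex.I_mul_I + ((p.1 : ℂ) * E * f) * hst

lemma Z3_sep (τ σ : ℝ) (F : ℝ → ℂ) (hF : Differentiable ℝ F) :
    Z3op (sep τ σ F) = sep τ σ (fun y => (σ : ℂ) * F y) := by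
  funext p
  have hd := (hF (Real.sqrt τ * p.1)).hasDerivAt
  simp only [Z3op, sep_fd3 τ σ F _ p hd, sep]
  ring

lemma sep_congr (τ σ : ℝ) {F G : ℝ → ℂ} (h : ∀ y, F y = G y) : sep τ σ F = sep τ σ G := by
  funext p; simp only [sep, h]

lemma xpow_sep (τ σ : ℝ) (hτ : 0 < τ) (m : ℕ) (G : ℝ → ℂ) :
    (fun q : ℝ × ℝ × ℝ => (q.1 : ℂ) ^ (2 * m) * sep τ σ G q)
      = sep τ σ (fun y => ((τ ^ (-(m : ℤ)) : ℝ) : ℂ) * (y : ℂ) ^ (2 * m) * G y) := by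
  funext q
  simp only [sep, Complex.ofReal_mul]
  have hτ0 : (τ : ℂ) ≠ 0 := by exact_mod_cast hτ.ne'
  have key : ((τ ^ (-(m : ℤ)) : ℝ) : ℂ) * ((Real.sqrt τ : ℂ) * (q.1 : ℂ)) ^ (2 * m)
      = (q.1 : ℂ) ^ (2 * m) := by
    have h1 : ((Real.sqrt τ : ℂ)) ^ (2 * m) = (τ : ℂ) ^ m := by
      rw [pow_mul]
      norm_cast
      rw [Real.sq_sqrt hτ.le]
    have h2 : ((τ ^ (-(m : ℤ)) : ℝ) : ℂ) = ((τ : ℂ) ^ m)⁻¹ := by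
      push_cast
      rw [zpow_neg, zpow_natCast]
    rw [mul_pow, h1, h2, ← mul_assoc, inv_mul_cancel₀ (pow_ne_zero _ hτ0), one_mul]
  linear_combination (-(Complex.exp (Complex.I * τ * q.2.1) * ((Real.exp (σ * q.2.2) : ℝ) : ℂ)
    * G (Real.sqrt τ * q.1))) * key

/-- If `ψ` is a Schwartz eigenfunction `Q_τ ψ = λ ψ` and `σ² = τλ`, then
`u(x,t,s) = e^{iτt} e^{σs} ψ(τ^{1/2} x)` solves `𝔏 u = 0` on ℝ³. -/

theorem null_solution (k : ℕ) (hk : 1 ≤ k) (τ : ℝ) (hτ : 1 ≤ τ)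
    (lamv σ : ℝ) (hlam : 0 ≤ lamv) (hσ : 0 ≤ σ) (hσ2 : σ ^ 2 = τ * lamv)
    (ψ : SchwartzMap ℝ ℂ) (heig : ∀ y : ℝ, Qop k τ (fun x => ψ x) y = lamv * ψ y)
    (u : ℝ × ℝ × ℝ → ℂ)
    (hu : ∀ p : ℝ × ℝ × ℝ, u p = Complex.exp (Complex.I * τ * p.2.1)
        * (Real.exp (σ * p.2.2) : ℂ) * ψ (Real.sqrt τ * p.1)) :
    ∀ p : ℝ × ℝ × ℝ, frakL3 k u p = 0 := by
  intro p
  have hτ0 : (0 : ℝ) < τ := lt_of_lt_of_le zero_lt_one hτ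
  have hu' : u = sep τ σ (fun x => ψ x) := funext hu
  have hcd := ψ.smooth ⊤
  have hψd : Differentiable ℝ (fun x : ℝ => (ψ x : ℂ)) :=
    hcd.differentiable (by simp)
  have hdd : Differentiable ℝ (deriv (fun x : ℝ => (ψ x : ℂ))) :=
    (contDiff_infty_iff_deriv.mp hcd).2.differentiable (by simp)
  have hId : Differentiable ℝ (fun y : ℝ => (y : ℂ)) := Complex.ofRealCLM.differentiable
  have hA : Differentiable ℝ
      (fun y : ℝ => deriv (fun x : ℝ => (ψ x : ℂ)) y + (y : ℂ) * ψ y) :=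
    hdd.add (hId.mul hψd)
  have hB : Differentiable ℝ
      (fun y : ℝ => deriv (fun x : ℝ => (ψ x : ℂ)) y - (y : ℂ) * ψ y) :=
    hdd.sub (hId.mul hψd)
  have hC : Differentiable ℝ
      (fun y : ℝ => (y : ℂ) ^ (2 * k) *
        (deriv (fun x : ℝ => (ψ x : ℂ)) y - (y : ℂ) * ψ y)) :=
    (hId.pow _).mul hB
  have hst : (Real.sqrt τ : ℂ) * (Real.sqrt τ : ℂ) = (τ : ℂ) := by
    norm_cast; exact Real.mul_self_sqrt hτ0.le
  -- first term
  have h1 : Z1op u = sep τ σ (fun y =>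
      (Real.sqrt τ : ℂ) * (deriv (fun x : ℝ => (ψ x : ℂ)) y + (y : ℂ) * ψ y)) := by
    rw [hu']; exact Z1_sep τ σ hτ0.le _ hψd
  have h2 : Lop3 (Z1op u) = sep τ σ (fun y => (τ : ℂ) *
      (deriv (fun z : ℝ => deriv (fun x : ℝ => (ψ x : ℂ)) z + (z : ℂ) * ψ z) y
        - (y : ℂ) * (deriv (fun x : ℝ => (ψ x : ℂ)) y + (y : ℂ) * ψ y))) := by
    rw [h1, Lop3_sep τ σ hτ0.le _ (hA.const_mul _)]
    apply sep_congr
    intro y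
    rw [deriv_const_mul _ (hA y)]
    linear_combination (deriv (fun z : ℝ => deriv (fun x : ℝ => (ψ x : ℂ)) z + (z : ℂ) * ψ z) y
      - (y : ℂ) * (deriv (fun x : ℝ => (ψ x : ℂ)) y + (y : ℂ) * ψ y)) * hst
  -- middle term
  have hL : Lop3 u = sep τ σ (fun y =>
      (Real.sqrt τ : ℂ) * (deriv (fun x : ℝ => (ψ x : ℂ)) y - (y : ℂ) * ψ y)) := by
    rw [hu']; exact Lop3_sep τ σ hτ0.le _ hψd
  have hmid : (fun q : ℝ × ℝ × ℝ => (q.1 : ℂ) ^ k * Z2op k u q)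
      = sep τ σ (fun y => (((τ ^ (-(k : ℤ)) : ℝ) : ℂ) * (Real.sqrt τ : ℂ)) *
          ((y : ℂ) ^ (2 * k) *
            (deriv (fun x : ℝ => (ψ x : ℂ)) y - (y : ℂ) * ψ y))) := by
    have e1 : (fun q : ℝ × ℝ × ℝ => (q.1 : ℂ) ^ k * Z2op k u q)
        = fun q => (q.1 : ℂ) ^ (2 * k) * sep τ σ (fun y =>
            (Real.sqrt τ : ℂ) * (deriv (fun x : ℝ => (ψ x : ℂ)) y - (y : ℂ) * ψ y)) q := by
      funext q
      simp only [Z2op, hL]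
      ring
    rw [e1, xpow_sep τ σ hτ0 k]
    apply sep_congr
    intro y
    ring
  have h3 : Z1op (fun q : ℝ × ℝ × ℝ => (q.1 : ℂ) ^ k * Z2op k u q)
      = sep τ σ (fun y => (τ : ℂ) * (((τ ^ (-(k : ℤ)) : ℝ) : ℂ) *
          (deriv (fun z : ℝ => (z : ℂ) ^ (2 * k) *
              (deriv (fun x : ℝ => (ψ x : ℂ)) z - (z : ℂ) * ψ z)) y
            + (y : ℂ) * ((y : ℂ) ^ (2 * k) *
              (deriv (fun x : ℝ => (ψ x : ℂ)) y - (y : ℂ) * ψ y))))) := by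
    rw [hmid, Z1_sep τ σ hτ0.le _ (hC.const_mul _)]
    apply sep_congr
    intro y
    rw [deriv_const_mul _ (hC y)]
    linear_combination (((τ ^ (-(k : ℤ)) : ℝ) : ℂ) *
      (deriv (fun z : ℝ => (z : ℂ) ^ (2 * k) *
          (deriv (fun x : ℝ => (ψ x : ℂ)) z - (z : ℂ) * ψ z)) y
        + (y : ℂ) * ((y : ℂ) ^ (2 * k) *
          (deriv (fun x : ℝ => (ψ x : ℂ)) y - (y : ℂ) * ψ y)))) * hst
  -- last term
  have h4 : Z3op (Z3op u) = sep τ σ (fun y => (σ : ℂ) * ((σ : ℂ) * ψ y)) := by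
    rw [hu', Z3_sep τ σ _ hψd, Z3_sep τ σ _ (hψd.const_mul _)]
  -- assemble
  have hq := heig (Real.sqrt τ * p.1)
  simp only [Qop] at hq
  have hσ2c : (σ : ℂ) * (σ : ℂ) = (τ : ℂ) * (lamv : ℂ) := by
    norm_cast; rw [← hσ2]; ring
  simp only [frakL3, h2, h3, h4, sep]
  linear_combination (Complex.exp (Complex.I * τ * p.2.1) * ((Real.exp (σ * p.2.2) : ℝ) : ℂ)
      * (τ : ℂ)) * hq
    - (Complex.exp (Complex.I * τ * p.2.1) * ((Real.exp (σ * p.2.2) : ℝ) : ℂ)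
      * (ψ (Real.sqrt τ * p.1) : ℂ)) * hσ2c
end
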